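/- Let H be a real inner product space, w* ∈ H, C ≥ 0, T ≥ 1, and α ∈ (0,1]. For t = 1,…,T let p_t, q_t, b_t ∈ H with ‖p_t‖ ≤ C, ‖q_t‖ ≤ C, ‖b_t‖ ≤ C, and let ξ_t ∈ ℝ. Define weights by w_1 = 0 and w_{t+1} = w_t + b_t − q_t. Assume the prediction condition ⟪w_t, q_t⟫ ≥ ⟪w_t, b_t⟫ holds for all t, and the strictly α-informative feedback condition ⟪w*, b_t⟫ ≥ ⟪w*, q_t⟫ + α(⟪w*, p_t⟫ − ⟪w*, q_t⟫) − ξ_t holds for all t. Then the average regret satisfies (1/T) · Σ_{t=1}^T (⟪w*, p_t⟫ − ⟪w*, q_t⟫) ≤ 2·C·‖w*‖/(α·√T) + (1/(α·T)) · Σ_{t=1}^T ξ_t. -/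

import Mathlib

open scoped InnerProductSpace BigOperators

/-- Average regret bound for the trajectory preference perceptron under
strictly α-informative feedback. -/
theorem tpp_average_regret_bound
    {H : Type*} [NormedAddCommGroup H] [InnerProductSpace ℝ H]
    (wstar : H) (C : ℝ) (hC : 0 ≤ C) (T : ℕ) (hT : 1 ≤ T)
    (α : ℝ) (hα0 : 0 < α) (hα1 : α ≤ 1)
    (p q b : ℕ → H) (ξ : ℕ → ℝ)
    (hp : ∀ t, 1 ≤ t → t ≤ T → ‖p t‖ ≤ C)
    (hq : ∀ t, 1 ≤ t → t ≤ T → ‖q t‖ ≤ C)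
    (hb : ∀ t, 1 ≤ t → t ≤ T → ‖b t‖ ≤ C)
    (w : ℕ → H) (hw1 : w 1 = 0)
    (hwupd : ∀ t, 1 ≤ t → t ≤ T → w (t + 1) = w t + b t - q t)
    (hpred : ∀ t, 1 ≤ t → t ≤ T → ⟪w t, b t⟫_ℝ ≤ ⟪w t, q t⟫_ℝ)
    (hfeed : ∀ t, 1 ≤ t → t ≤ T →
      ⟪wstar, q t⟫_ℝ + α * (⟪wstar, p t⟫_ℝ - ⟪wstar, q t⟫_ℝ) - ξ t ≤ ⟪wstar, b t⟫_ℝ) :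
    (1 / (T : ℝ)) * ∑ t ∈ Finset.Icc 1 T, (⟪wstar, p t⟫_ℝ - ⟪wstar, q t⟫_ℝ) ≤
      2 * C * ‖wstar‖ / (α * Real.sqrt T) +
        (1 / (α * T)) * ∑ t ∈ Finset.Icc 1 T, ξ t := by
  have key : ∀ n, n ≤ T → ‖w (n + 1)‖ ^ 2 ≤ 4 * C ^ 2 * n ∧
      (∑ t ∈ Finset.Icc 1 n, (α * (⟪wstar, p t⟫_ℝ - ⟪wstar, q t⟫_ℝ) - ξ t)) ≤
        ⟪wstar, w (n + 1)⟫_ℝ := by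
    intro n
    induction n with
    | zero =>
        intro _
        simp [hw1]
    | succ n ih =>
        intro hle
        obtain ⟨ih1, ih2⟩ := ih (by omega)
        have h1 : 1 ≤ n + 1 := by omega
        have hupd := hwupd (n + 1) h1 hle
        constructor
        · have hnorm : ‖b (n + 1) - q (n + 1)‖ ≤ 2 * C := by
            calc ‖b (n + 1) - q (n + 1)‖ ≤ ‖b (n + 1)‖ + ‖q (n + 1)‖ := norm_sub_le _ _
              _ ≤ 2 * C := by linarith [hb (n + 1) h1 hle, hq (n + 1) h1 hle]
          have hsq : ‖b (n + 1) - q (n + 1)‖ ^ 2 ≤ 4 * C ^ 2 := by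
            nlinarith [norm_nonneg (b (n + 1) - q (n + 1))]
          have hexp : ‖w (n + 1 + 1)‖ ^ 2 =
              ‖w (n + 1)‖ ^ 2 + 2 * ⟪w (n + 1), b (n + 1) - q (n + 1)⟫_ℝ +
                ‖b (n + 1) - q (n + 1)‖ ^ 2 := by
            rw [hupd, add_sub_assoc]
            exact norm_add_sq_real _ _
          have hinn : ⟪w (n + 1), b (n + 1) - q (n + 1)⟫_ℝ ≤ 0 := by
            rw [inner_sub_right]
            linarith [hpred (n + 1) h1 hle]
          rw [hexp]
          push_cast
          nlinarith
        · rw [Finset.sum_Icc_succ_top h1, hupd, add_sub_assoc, inner_add_right,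
            inner_sub_right]
          have := hfeed (n + 1) h1 hle
          linarith
  obtain ⟨h1, h2⟩ := key T le_rfl
  have hT0 : (0 : ℝ) < T := by exact_mod_cast hT
  have hsT : 0 < Real.sqrt T := Real.sqrt_pos.mpr hT0
  have hnormw : ‖w (T + 1)‖ ≤ 2 * C * Real.sqrt T := by
    have h2CT : (0 : ℝ) ≤ 2 * C * Real.sqrt T := by positivity
    nlinarith [norm_nonneg (w (T + 1)), Real.sq_sqrt hT0.le]
  have hcs : ⟪wstar, w (T + 1)⟫_ℝ ≤ ‖wstar‖ * ‖w (T + 1)‖ := real_inner_le_norm _ _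
  have hmain : α * (∑ t ∈ Finset.Icc 1 T, (⟪wstar, p t⟫_ℝ - ⟪wstar, q t⟫_ℝ)) -
      (∑ t ∈ Finset.Icc 1 T, ξ t) ≤ 2 * C * ‖wstar‖ * Real.sqrt T := by
    have hsum : (∑ t ∈ Finset.Icc 1 T, (α * (⟪wstar, p t⟫_ℝ - ⟪wstar, q t⟫_ℝ) - ξ t)) =
        α * (∑ t ∈ Finset.Icc 1 T, (⟪wstar, p t⟫_ℝ - ⟪wstar, q t⟫_ℝ)) -
          (∑ t ∈ Finset.Icc 1 T, ξ t) := by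
      rw [Finset.sum_sub_distrib, Finset.mul_sum]
    have hn : ‖wstar‖ * ‖w (T + 1)‖ ≤ ‖wstar‖ * (2 * C * Real.sqrt T) :=
      mul_le_mul_of_nonneg_left hnormw (norm_nonneg _)
    rw [← hsum]
    nlinarith
  have hTeq : (T : ℝ) = Real.sqrt T * Real.sqrt T := (Real.mul_self_sqrt hT0.le).symm
  have heq : 2 * C * ‖wstar‖ / (α * Real.sqrt T) =
      2 * C * ‖wstar‖ * Real.sqrt T / (α * T) := by
    field_simp; ring_nf; rw [Real.sq_sqrt hT0.le]
  rw [heq, one_div, one_div, inv_mul_eq_div, inv_mul_eq_div, ← add_div,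
    div_le_div_iff₀ hT0 (by positivity : (0:ℝ) < α * T)]
  nlinarith [mul_le_mul_of_nonneg_right hmain hT0.le]
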